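/- Let Δ > 0, γ > Δ and C > 0. Let F, G : ℂ → ℂ be continuous on the closed upper half-plane {z : Im z ≥ 0}, holomorphic on {z : Im z > 0}, and satisfy |F(z)| ≤ C(1 + |z|)^{−γ} and |G(z)| ≤ C(1 + |z|)^{−γ} for all z with Im z ≥ 0. For w in the closed strip S̄ = {w ∈ ℂ : 0 ≤ Im w ≤ 1} define H(w) = ∫₀^∞ ω^{2Δ−1} F(−e^{−πw} ω) G(e^{πw} ω) dω (note that for such w both arguments −e^{−πw}ω and e^{πw}ω lie in the closed upper half-plane for ω ≥ 0, and the integral converges absolutely). Then H is continuous on S̄, holomorphic on the open strip {0 < Im w < 1}, and its boundary values are H(s) = ∫₀^∞ ω^{2Δ−1} F(−e^{−πs}ω) G(e^{πs}ω) dω and H(s + i) = ∫₀^∞ ω^{2Δ−1} F(e^{−πs}ω) G(−e^{πs}ω) dω for s ∈ ℝ. -/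

import Mathlib

open MeasureTheory

section KMSAux

open Real Set Metric

lemma aux_prod_bound {γ x y ω : ℝ} (hγ : 0 ≤ γ) (hx : 0 < x) (hy : 0 < y)
    (hxy : x * y = 1) (hω : 0 ≤ ω) :
    (1 + x * ω) ^ (-γ) * (1 + y * ω) ^ (-γ) ≤ (1 + ω) ^ (-(2 * γ)) := by
  have h1 : (0:ℝ) < 1 + x * ω := by positivity
  have h2 : (0:ℝ) < 1 + y * ω := by positivity
  have h3 : (0:ℝ) < 1 + ω := by positivity
  have key : (1 + ω) ^ (2:ℕ) ≤ (1 + x * ω) * (1 + y * ω) := by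
    have hxy2 : 2 ≤ x + y := by nlinarith [sq_nonneg (x - 1), sq_nonneg (x - y)]
    nlinarith [mul_nonneg (mul_nonneg hω hω) (sub_nonneg.2 hxy2), sq_nonneg ω]
  calc (1 + x * ω) ^ (-γ) * (1 + y * ω) ^ (-γ)
      = ((1 + x * ω) * (1 + y * ω)) ^ (-γ) := (Real.mul_rpow h1.le h2.le).symm
    _ ≤ ((1 + ω) ^ (2:ℕ)) ^ (-γ) := by
        apply Real.rpow_le_rpow_of_nonpos (by positivity) key (by linarith)
    _ = (1 + ω) ^ (-(2 * γ)) := by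
        rw [← Real.rpow_natCast (1 + ω) 2, ← Real.rpow_mul h3.le]
        norm_num

lemma aux_bound_integrable {Δ γ : ℝ} (K : ℝ) (hΔ : 0 < Δ) (hγ : Δ < γ) :
    Integrable (fun ω : ℝ => K * (ω ^ (2 * Δ - 1) * (1 + ω) ^ (-(2 * γ))))
      (volume.restrict (Set.Ioi 0)) := by
  apply Integrable.const_mul
  have hγ0 : (0:ℝ) < γ := hΔ.trans hγ
  have hmeas : ∀ s : Set ℝ, MeasurableSet s → s ⊆ Set.Ioi 0 →
      AEStronglyMeasurable (fun ω : ℝ => ω ^ (2 * Δ - 1) * (1 + ω) ^ (-(2 * γ)))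
      (volume.restrict s) := by
    intro s hs hsub
    apply ContinuousOn.aestronglyMeasurable _ hs
    intro ω hω
    have hω' : (0:ℝ) < ω := hsub hω
    exact (((Real.continuousAt_rpow_const _ _ (Or.inl hω'.ne')).comp continuousAt_id).mul
      (((Real.continuousAt_rpow_const _ _ (Or.inl (show (0:ℝ) < 1 + ω by linarith).ne')).comp
        (continuousAt_const.add continuousAt_id)))).continuousWithinAt
  have h1 : IntegrableOn (fun ω : ℝ => ω ^ (2 * Δ - 1) * (1 + ω) ^ (-(2 * γ))) (Set.Ioc 0 1) := by
    apply Integrable.mono' (g := fun ω : ℝ => ω ^ (2 * Δ - 1))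
    · have := (intervalIntegral.intervalIntegrable_rpow' (a := 0) (b := 1)
        (by linarith : (-1:ℝ) < 2 * Δ - 1))
      rw [intervalIntegrable_iff_integrableOn_Ioc_of_le zero_le_one] at this
      exact this
    · exact hmeas _ measurableSet_Ioc Set.Ioc_subset_Ioi_self
    · filter_upwards [ae_restrict_mem measurableSet_Ioc] with ω hω
      have hω0 : (0:ℝ) < ω := hω.1
      rw [Real.norm_eq_abs, abs_of_nonneg (by positivity)]
      have : (1 + ω) ^ (-(2 * γ)) ≤ 1 :=
        Real.rpow_le_one_of_one_le_of_nonpos (by linarith) (by linarith)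
      nlinarith [Real.rpow_nonneg hω0.le (2 * Δ - 1),
        Real.rpow_nonneg (by linarith : (0:ℝ) ≤ 1 + ω) (-(2 * γ))]
  have h2 : IntegrableOn (fun ω : ℝ => ω ^ (2 * Δ - 1) * (1 + ω) ^ (-(2 * γ))) (Set.Ioi 1) := by
    apply Integrable.mono' (g := fun ω : ℝ => ω ^ (2 * Δ - 1 + -(2 * γ)))
    · exact integrableOn_Ioi_rpow_of_lt (by linarith) one_pos
    · exact hmeas _ measurableSet_Ioi (fun x hx => show (0:ℝ) < x from lt_trans one_pos hx)
    · filter_upwards [ae_restrict_mem measurableSet_Ioi] with ω hω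
      have hω0 : (0:ℝ) < ω := lt_trans one_pos hω
      rw [Real.norm_eq_abs, abs_of_nonneg (by positivity), Real.rpow_add hω0]
      have : (1 + ω) ^ (-(2 * γ)) ≤ ω ^ (-(2 * γ)) :=
        Real.rpow_le_rpow_of_nonpos hω0 (by linarith) (by linarith)
      exact mul_le_mul_of_nonneg_left this (Real.rpow_nonneg hω0.le _)
  have hU : Set.Ioi (0:ℝ) = Set.Ioc 0 1 ∪ Set.Ioi 1 := (Set.Ioc_union_Ioi_eq_Ioi zero_le_one).symm
  rw [← IntegrableOn, hU]
  exact h1.union h2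

lemma kms_im_u (w : ℂ) (ω : ℝ) :
    (-(Complex.exp (-(Real.pi : ℂ) * w)) * (ω:ℂ)).im
      = Real.exp (-Real.pi * w.re) * Real.sin (Real.pi * w.im) * ω := by
  simp [Complex.mul_im, Complex.exp_im, Complex.mul_re, Real.sin_neg]

lemma kms_im_v (w : ℂ) (ω : ℝ) :
    (Complex.exp ((Real.pi : ℂ) * w) * (ω:ℂ)).im
      = Real.exp (Real.pi * w.re) * Real.sin (Real.pi * w.im) * ω := by
  simp [Complex.mul_im, Complex.exp_im, Complex.mul_re]

lemma kms_norm_u (w : ℂ) {ω : ℝ} (hω : 0 ≤ ω) :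
    ‖-(Complex.exp (-(Real.pi : ℂ) * w)) * (ω:ℂ)‖ = Real.exp (-Real.pi * w.re) * ω := by
  rw [norm_mul, norm_neg, Complex.norm_exp,
    Complex.norm_real, Real.norm_eq_abs, abs_of_nonneg hω]
  simp [Complex.mul_re]

lemma kms_norm_v (w : ℂ) {ω : ℝ} (hω : 0 ≤ ω) :
    ‖Complex.exp ((Real.pi : ℂ) * w) * (ω:ℂ)‖ = Real.exp (Real.pi * w.re) * ω := by
  rw [norm_mul, Complex.norm_exp,
    Complex.norm_real, Real.norm_eq_abs, abs_of_nonneg hω]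
  simp [Complex.mul_re]

lemma kms_norm_exp_u (w : ℂ) :
    ‖Complex.exp (-(Real.pi : ℂ) * w)‖ = Real.exp (-Real.pi * w.re) := by
  rw [Complex.norm_exp]
  simp [Complex.mul_re]

lemma kms_norm_exp_v (w : ℂ) :
    ‖Complex.exp ((Real.pi : ℂ) * w)‖ = Real.exp (Real.pi * w.re) := by
  rw [Complex.norm_exp]
  simp [Complex.mul_re]

lemma kms_sin_min {t₁ t₂ t : ℝ} (h0 : 0 ≤ t₁) (h1 : t₂ ≤ 1) (ha : t₁ ≤ t) (hb : t ≤ t₂) :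
    min (Real.sin (Real.pi * t₁)) (Real.sin (Real.pi * t₂)) ≤ Real.sin (Real.pi * t) := by
  rcases le_or_gt t (1/2) with h | h
  · refine (min_le_left _ _).trans ?_
    apply Real.strictMonoOn_sin.monotoneOn ⟨by nlinarith [Real.pi_pos], by nlinarith [Real.pi_pos]⟩
      ⟨by nlinarith [Real.pi_pos], by nlinarith [Real.pi_pos]⟩
    nlinarith [Real.pi_pos]
  · refine (min_le_right _ _).trans ?_
    have e1 : Real.sin (Real.pi * t) = Real.sin (Real.pi * (1 - t)) := by
      rw [show Real.pi * (1 - t) = Real.pi - Real.pi * t by ring, Real.sin_pi_sub]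
    have e2 : Real.sin (Real.pi * t₂) = Real.sin (Real.pi * (1 - t₂)) := by
      rw [show Real.pi * (1 - t₂) = Real.pi - Real.pi * t₂ by ring, Real.sin_pi_sub]
    rw [e1, e2]
    apply Real.strictMonoOn_sin.monotoneOn ⟨by nlinarith [Real.pi_pos], by nlinarith [Real.pi_pos]⟩
      ⟨by nlinarith [Real.pi_pos], by nlinarith [Real.pi_pos]⟩
    nlinarith [Real.pi_pos]

lemma kms_deriv_bound {C γ : ℝ} (hC : 0 < C) (hγ : 0 < γ) {F : ℂ → ℂ}
    (hFc : ContinuousOn F {z : ℂ | 0 ≤ z.im})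
    (hFa : DifferentiableOn ℂ F {z : ℂ | 0 < z.im})
    (hFb : ∀ z : ℂ, 0 ≤ z.im → ‖F z‖ ≤ C * (1 + ‖z‖) ^ (-γ))
    {z : ℂ} (hz : 0 < z.im) :
    ‖deriv F z‖ ≤ (2 : ℝ) ^ γ * 2 * C / z.im * (1 + ‖z‖) ^ (-γ) := by
  set R := z.im / 2 with hR
  have hR0 : 0 < R := by positivity
  have hsub : closedBall z R ⊆ {ζ : ℂ | 0 < ζ.im} := by
    intro ζ hζ
    have h1 : |(ζ - z).im| ≤ R :=
      (Complex.abs_im_le_norm _).trans (by simpa [Complex.dist_eq] using mem_closedBall.1 hζ)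
    have : z.im - R ≤ ζ.im := by
      have := neg_le_of_abs_le h1
      simp only [Complex.sub_im] at this
      linarith
    simp only [Set.mem_setOf_eq]
    linarith [hR0]
  have hd : DiffContOnCl ℂ F (ball z R) := by
    refine ⟨hFa.mono (fun ζ hζ => hsub (ball_subset_closedBall hζ)), ?_⟩
    have hmono : closedBall z R ⊆ {z : ℂ | 0 ≤ z.im} :=
      fun ζ hζ => le_of_lt (show 0 < ζ.im from hsub hζ)
    apply (hFc.mono hmono).mono
    exact (closure_ball_subset_closedBall : closure (ball z R) ⊆ _)
  have hb : ∀ ζ ∈ sphere z R, ‖F ζ‖ ≤ C * ((2:ℝ)^γ * (1 + ‖z‖) ^ (-γ)) := by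
    intro ζ hζ
    have hζim : 0 < ζ.im := hsub (sphere_subset_closedBall hζ)
    have hz2 : z.im ≤ ‖z‖ := (le_abs_self _).trans (Complex.abs_im_le_norm z)
    have hζn : ‖z‖ / 2 ≤ ‖ζ‖ := by
      have h1 : ‖z‖ - ‖ζ‖ ≤ ‖z - ζ‖ := norm_sub_norm_le _ _
      have h2 : ‖z - ζ‖ = R := by
        rw [norm_sub_rev]
        simpa [Complex.dist_eq] using mem_sphere_iff_norm.1 hζ
      rw [hR] at h2
      linarith
    refine (hFb ζ hζim.le).trans ?_
    have key : (1 + ‖ζ‖) ^ (-γ) ≤ ((1 + ‖z‖)/2) ^ (-γ) := by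
      apply Real.rpow_le_rpow_of_nonpos (by positivity) (by linarith) (by linarith)
    refine (mul_le_mul_of_nonneg_left key hC.le).trans ?_
    rw [Real.div_rpow (by positivity) (by norm_num), Real.rpow_neg (by norm_num : (0:ℝ) ≤ 2),
      div_eq_mul_inv, inv_inv]
    apply le_of_eq
    ring
  have := Complex.norm_deriv_le_of_forall_mem_sphere_norm_le hR0 hd hb
  calc ‖deriv F z‖ ≤ C * ((2:ℝ)^γ * (1 + ‖z‖) ^ (-γ)) / R := this
    _ = (2 : ℝ) ^ γ * 2 * C / z.im * (1 + ‖z‖) ^ (-γ) := by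
        rw [hR]; field_simp

lemma kms_alg {c₁ Cc E m ω s p q r i x dF gz : ℝ}
    (hs : 0 ≤ s) (hp : 0 ≤ p) (hq : 0 ≤ q) (hpq : p * q ≤ r)
    (hc₁ : 0 ≤ c₁) (hCc : 0 ≤ Cc) (hE : 0 < E) (hm : 0 < m) (hω : 0 < ω)
    (hi : m / E * ω ≤ i) (hi0 : 0 < i)
    (hdF : dF ≤ c₁ / i * p) (hdF0 : 0 ≤ dF)
    (hx : x ≤ E) (hx0 : 0 ≤ x)
    (hgz : gz ≤ Cc * q) (hgz0 : 0 ≤ gz) :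
    s * (dF * (x * Real.pi * ω)) * gz ≤ (c₁ * Real.pi * E ^ 2 * Cc / m) * (s * r) := by
  have hπ := Real.pi_pos
  have h1 : dF ≤ c₁ * E / (m * ω) * p := by
    refine hdF.trans (mul_le_mul_of_nonneg_right ?_ hp)
    rw [div_le_div_iff₀ hi0 (by positivity)]
    have hi' : m * ω ≤ i * E := by
      rwa [div_mul_eq_mul_div, div_le_iff₀ hE] at hi
    nlinarith [mul_le_mul_of_nonneg_left hi' hc₁]
  have step1 : s * (dF * (x * Real.pi * ω)) * gz
      ≤ s * ((c₁ * E / (m * ω) * p) * (E * Real.pi * ω)) * (Cc * q) := by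
    have hb1 : dF * (x * Real.pi * ω) ≤ (c₁ * E / (m * ω) * p) * (E * Real.pi * ω) := by
      apply mul_le_mul h1
        (mul_le_mul_of_nonneg_right (mul_le_mul_of_nonneg_right hx hπ.le) hω.le)
        (by positivity) (by positivity)
    apply mul_le_mul (mul_le_mul_of_nonneg_left hb1 hs) hgz hgz0
    positivity
  refine step1.trans ?_
  have heq : s * ((c₁ * E / (m * ω) * p) * (E * Real.pi * ω)) * (Cc * q)
      = (c₁ * Real.pi * E ^ 2 * Cc / m) * (s * (p * q)) := by
    field_simp
  rw [heq]
  exact mul_le_mul_of_nonneg_left (mul_le_mul_of_nonneg_left hpq hs) (by positivity)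

lemma kms_sin_nonneg {w : ℂ} (h0 : 0 ≤ w.im) (h1 : w.im ≤ 1) :
    0 ≤ Real.sin (Real.pi * w.im) :=
  Real.sin_nonneg_of_nonneg_of_le_pi (by positivity) (by nlinarith [Real.pi_pos])

lemma kms_xy (w : ℂ) : Real.exp (-Real.pi * w.re) * Real.exp (Real.pi * w.re) = 1 := by
  rw [← Real.exp_add]; ring_nf; exact Real.exp_zero

lemma kms_pointwise_bound {Δ γ C : ℝ} (hγ0 : 0 < γ) (hC : 0 < C) {F G : ℂ → ℂ}
    (hFb : ∀ z : ℂ, 0 ≤ z.im → ‖F z‖ ≤ C * (1 + ‖z‖) ^ (-γ))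
    (hGb : ∀ z : ℂ, 0 ≤ z.im → ‖G z‖ ≤ C * (1 + ‖z‖) ^ (-γ))
    {w : ℂ} (h0 : 0 ≤ w.im) (h1 : w.im ≤ 1) {ω : ℝ} (hω : 0 < ω) :
    ‖((ω ^ (2 * Δ - 1) : ℝ) : ℂ) * F (-(Complex.exp (-(Real.pi : ℂ) * w)) * (ω:ℂ)) *
        G (Complex.exp ((Real.pi : ℂ) * w) * (ω:ℂ))‖
      ≤ C ^ 2 * (ω ^ (2 * Δ - 1) * (1 + ω) ^ (-(2 * γ))) := by
  set x := Real.exp (-Real.pi * w.re) with hxdef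
  set y := Real.exp (Real.pi * w.re) with hydef
  have hx : 0 < x := Real.exp_pos _
  have hy : 0 < y := Real.exp_pos _
  have hsin := kms_sin_nonneg h0 h1
  have himu : 0 ≤ (-(Complex.exp (-(Real.pi : ℂ) * w)) * (ω:ℂ)).im := by
    rw [kms_im_u]; positivity
  have himv : 0 ≤ (Complex.exp ((Real.pi : ℂ) * w) * (ω:ℂ)).im := by
    rw [kms_im_v]; positivity
  have hF := hFb _ himu
  have hG := hGb _ himv
  rw [kms_norm_u w hω.le] at hF
  rw [kms_norm_v w hω.le] at hG
  have hs : (0:ℝ) ≤ ω ^ (2 * Δ - 1) := Real.rpow_nonneg hω.le _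
  calc ‖((ω ^ (2 * Δ - 1) : ℝ) : ℂ) * F (-(Complex.exp (-(Real.pi : ℂ) * w)) * (ω:ℂ)) *
        G (Complex.exp ((Real.pi : ℂ) * w) * (ω:ℂ))‖
      = ω ^ (2 * Δ - 1) * ‖F (-(Complex.exp (-(Real.pi : ℂ) * w)) * (ω:ℂ))‖ *
        ‖G (Complex.exp ((Real.pi : ℂ) * w) * (ω:ℂ))‖ := by
        rw [norm_mul, norm_mul, Complex.norm_real, Real.norm_eq_abs, abs_of_nonneg hs]
    _ ≤ ω ^ (2 * Δ - 1) * (C * (1 + x * ω) ^ (-γ)) * (C * (1 + y * ω) ^ (-γ)) := by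
        apply mul_le_mul (mul_le_mul_of_nonneg_left hF hs) hG (norm_nonneg _)
        positivity
    _ = C ^ 2 * (ω ^ (2 * Δ - 1) * ((1 + x * ω) ^ (-γ) * (1 + y * ω) ^ (-γ))) := by ring
    _ ≤ C ^ 2 * (ω ^ (2 * Δ - 1) * (1 + ω) ^ (-(2 * γ))) := by
        apply mul_le_mul_of_nonneg_left _ (by positivity)
        exact mul_le_mul_of_nonneg_left (aux_prod_bound hγ0.le hx hy (kms_xy w) hω.le) hs

lemma kms_meas {Δ : ℝ} {F G : ℂ → ℂ}
    (hFc : ContinuousOn F {z : ℂ | 0 ≤ z.im}) (hGc : ContinuousOn G {z : ℂ | 0 ≤ z.im})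
    {w : ℂ} (h0 : 0 ≤ w.im) (h1 : w.im ≤ 1) :
    AEStronglyMeasurable
      (fun ω : ℝ => ((ω ^ (2 * Δ - 1) : ℝ) : ℂ) *
        F (-(Complex.exp (-(Real.pi : ℂ) * w)) * (ω:ℂ)) *
        G (Complex.exp ((Real.pi : ℂ) * w) * (ω:ℂ)))
      (volume.restrict (Set.Ioi 0)) := by
  have hsin := kms_sin_nonneg h0 h1
  have hc : ContinuousOn (fun ω : ℝ => ((ω ^ (2 * Δ - 1) : ℝ) : ℂ)) (Set.Ioi 0) := by
    intro ω hω
    exact (Complex.continuous_ofReal.continuousAt.comp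
      (Real.continuousAt_rpow_const _ _ (Or.inl (ne_of_gt hω)))).continuousWithinAt
  have huc : Continuous (fun ω : ℝ => -(Complex.exp (-(Real.pi : ℂ) * w)) * (ω:ℂ)) :=
    continuous_const.mul Complex.continuous_ofReal
  have hvc : Continuous (fun ω : ℝ => Complex.exp ((Real.pi : ℂ) * w) * (ω:ℂ)) :=
    continuous_const.mul Complex.continuous_ofReal
  have hFcc : ContinuousOn (fun ω : ℝ => F (-(Complex.exp (-(Real.pi : ℂ) * w)) * (ω:ℂ)))
      (Set.Ioi 0) := by
    apply hFc.comp huc.continuousOn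
    intro ω hω
    have : (0:ℝ) < ω := hω
    simp only [Set.mem_setOf_eq, kms_im_u]
    positivity
  have hGcc : ContinuousOn (fun ω : ℝ => G (Complex.exp ((Real.pi : ℂ) * w) * (ω:ℂ)))
      (Set.Ioi 0) := by
    apply hGc.comp hvc.continuousOn
    intro ω hω
    have : (0:ℝ) < ω := hω
    simp only [Set.mem_setOf_eq, kms_im_v]
    positivity
  exact ((hc.mul hFcc).mul hGcc).aestronglyMeasurable measurableSet_Ioi

end KMSAux

section KMSAux2
open Real Set Metric

lemma kms_contw {Δ : ℝ} {F G : ℂ → ℂ}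
    (hFc : ContinuousOn F {z : ℂ | 0 ≤ z.im}) (hGc : ContinuousOn G {z : ℂ | 0 ≤ z.im})
    {ω : ℝ} (hω : 0 < ω) {w₀ : ℂ} (hw₀ : w₀ ∈ {w : ℂ | 0 ≤ w.im ∧ w.im ≤ 1}) :
    ContinuousWithinAt
      (fun w : ℂ => ((ω ^ (2 * Δ - 1) : ℝ) : ℂ) *
        F (-(Complex.exp (-(Real.pi : ℂ) * w)) * (ω:ℂ)) *
        G (Complex.exp ((Real.pi : ℂ) * w) * (ω:ℂ)))
      {w : ℂ | 0 ≤ w.im ∧ w.im ≤ 1} w₀ := by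
  have huc : Continuous (fun w : ℂ => -(Complex.exp (-(Real.pi : ℂ) * w)) * (ω:ℂ)) := by
    fun_prop
  have hvc : Continuous (fun w : ℂ => Complex.exp ((Real.pi : ℂ) * w) * (ω:ℂ)) := by
    fun_prop
  have hmapu : Set.MapsTo (fun w : ℂ => -(Complex.exp (-(Real.pi : ℂ) * w)) * (ω:ℂ))
      {w : ℂ | 0 ≤ w.im ∧ w.im ≤ 1} {z : ℂ | 0 ≤ z.im} := by
    intro w hw
    have hsin := kms_sin_nonneg hw.1 hw.2
    simp only [Set.mem_setOf_eq, kms_im_u]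
    positivity
  have hmapv : Set.MapsTo (fun w : ℂ => Complex.exp ((Real.pi : ℂ) * w) * (ω:ℂ))
      {w : ℂ | 0 ≤ w.im ∧ w.im ≤ 1} {z : ℂ | 0 ≤ z.im} := by
    intro w hw
    have hsin := kms_sin_nonneg hw.1 hw.2
    simp only [Set.mem_setOf_eq, kms_im_v]
    positivity
  have hFcw : ContinuousWithinAt
      (fun w : ℂ => F (-(Complex.exp (-(Real.pi : ℂ) * w)) * (ω:ℂ)))
      {w : ℂ | 0 ≤ w.im ∧ w.im ≤ 1} w₀ :=
    ContinuousWithinAt.comp (f := fun w : ℂ => -(Complex.exp (-(Real.pi : ℂ) * w)) * (ω:ℂ))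
      (g := F) (hFc _ (hmapu hw₀)) huc.continuousWithinAt hmapu
  have hGcw : ContinuousWithinAt
      (fun w : ℂ => G (Complex.exp ((Real.pi : ℂ) * w) * (ω:ℂ)))
      {w : ℂ | 0 ≤ w.im ∧ w.im ≤ 1} w₀ :=
    ContinuousWithinAt.comp (f := fun w : ℂ => Complex.exp ((Real.pi : ℂ) * w) * (ω:ℂ))
      (g := G) (hGc _ (hmapv hw₀)) hvc.continuousWithinAt hmapv
  exact (continuousWithinAt_const.mul hFcw).mul hGcw

lemma kms_norm_u' (w : ℂ) {ω : ℝ} (hω : 0 ≤ ω) :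
    ‖-(Complex.exp (-(Real.pi : ℂ) * w) * -(Real.pi : ℂ)) * (ω:ℂ)‖
      = Real.exp (-Real.pi * w.re) * Real.pi * ω := by
  rw [norm_mul, norm_neg, norm_mul, norm_neg, kms_norm_exp_u, Complex.norm_real,
    Complex.norm_real, Real.norm_eq_abs, Real.norm_eq_abs,
    abs_of_nonneg Real.pi_pos.le, abs_of_nonneg hω]

lemma kms_norm_v' (w : ℂ) {ω : ℝ} (hω : 0 ≤ ω) :
    ‖Complex.exp ((Real.pi : ℂ) * w) * (Real.pi : ℂ) * (ω:ℂ)‖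
      = Real.exp (Real.pi * w.re) * Real.pi * ω := by
  rw [norm_mul, norm_mul, kms_norm_exp_v, Complex.norm_real,
    Complex.norm_real, Real.norm_eq_abs, Real.norm_eq_abs,
    abs_of_nonneg Real.pi_pos.le, abs_of_nonneg hω]

end KMSAux2

/-- The KMS analytic function: `H(w) = ∫₀^∞ ω^{2Δ-1} F(-e^{-πw} ω) G(e^{πw} ω) dω`. -/
noncomputable def kmsFun (Δ : ℝ) (F G : ℂ → ℂ) (w : ℂ) : ℂ :=
  ∫ ω in Set.Ioi (0 : ℝ),
    ((ω ^ (2 * Δ - 1) : ℝ) : ℂ) *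
      F (-(Complex.exp (-((Real.pi : ℂ)) * w)) * (ω : ℂ)) *
      G (Complex.exp ((Real.pi : ℂ) * w) * (ω : ℂ))

/-- Analytic core of Theorem 8 (modular flow of the future algebra is dilatation / KMS
condition): for `F, G` continuous on the closed upper half-plane, holomorphic on the open
upper half-plane, with decay `‖F(z)‖, ‖G(z)‖ ≤ C(1 + ‖z‖)^{-γ}`, `γ > Δ > 0`, the function
`H(w) = ∫₀^∞ ω^{2Δ-1} F(-e^{-πw}ω) G(e^{πw}ω) dω` has an absolutely convergent integrand on
the closed strip `0 ≤ Im w ≤ 1`, is continuous there, holomorphic on the open strip, with the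
stated boundary values at `Im w = 0` and `Im w = 1`. -/
theorem kms_strip_analyticity
    (Δ γ C : ℝ) (hΔ : 0 < Δ) (hγ : Δ < γ) (hC : 0 < C)
    (F G : ℂ → ℂ)
    (hFc : ContinuousOn F {z : ℂ | 0 ≤ z.im})
    (hFa : DifferentiableOn ℂ F {z : ℂ | 0 < z.im})
    (hFb : ∀ z : ℂ, 0 ≤ z.im → ‖F z‖ ≤ C * (1 + ‖z‖) ^ (-γ))
    (hGc : ContinuousOn G {z : ℂ | 0 ≤ z.im})
    (hGa : DifferentiableOn ℂ G {z : ℂ | 0 < z.im})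
    (hGb : ∀ z : ℂ, 0 ≤ z.im → ‖G z‖ ≤ C * (1 + ‖z‖) ^ (-γ)) :
    (∀ w : ℂ, 0 ≤ w.im → w.im ≤ 1 →
      IntegrableOn
        (fun ω : ℝ => ((ω ^ (2 * Δ - 1) : ℝ) : ℂ) *
          F (-(Complex.exp (-((Real.pi : ℂ)) * w)) * (ω : ℂ)) *
          G (Complex.exp ((Real.pi : ℂ) * w) * (ω : ℂ)))
        (Set.Ioi 0)) ∧
    ContinuousOn (kmsFun Δ F G) {w : ℂ | 0 ≤ w.im ∧ w.im ≤ 1} ∧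
    DifferentiableOn ℂ (kmsFun Δ F G) {w : ℂ | 0 < w.im ∧ w.im < 1} ∧
    (∀ s : ℝ, kmsFun Δ F G (s : ℂ) =
      ∫ ω in Set.Ioi (0 : ℝ),
        ((ω ^ (2 * Δ - 1) : ℝ) : ℂ) *
          F (((-(Real.exp (-(Real.pi * s))) * ω : ℝ) : ℂ)) *
          G (((Real.exp (Real.pi * s) * ω : ℝ) : ℂ))) ∧
    (∀ s : ℝ, kmsFun Δ F G ((s : ℂ) + Complex.I) =
      ∫ ω in Set.Ioi (0 : ℝ),
        ((ω ^ (2 * Δ - 1) : ℝ) : ℂ) *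
          F (((Real.exp (-(Real.pi * s)) * ω : ℝ) : ℂ)) *
          G (((-(Real.exp (Real.pi * s)) * ω : ℝ) : ℂ))) := by
  have hγ0 : 0 < γ := hΔ.trans hγ
  -- Part 1 : integrability
  have hint : ∀ w : ℂ, 0 ≤ w.im → w.im ≤ 1 →
      IntegrableOn
        (fun ω : ℝ => ((ω ^ (2 * Δ - 1) : ℝ) : ℂ) *
          F (-(Complex.exp (-((Real.pi : ℂ)) * w)) * (ω : ℂ)) *
          G (Complex.exp ((Real.pi : ℂ) * w) * (ω : ℂ)))
        (Set.Ioi 0) := by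
    intro w h0 h1
    apply Integrable.mono' (aux_bound_integrable (C ^ 2) hΔ hγ) (kms_meas hFc hGc h0 h1)
    filter_upwards [ae_restrict_mem measurableSet_Ioi] with ω hω
    exact kms_pointwise_bound hγ0 hC hFb hGb h0 h1 hω
  refine ⟨hint, ?_, ?_, ?_, ?_⟩
  -- Part 2 : continuity on the closed strip
  · intro w₀ hw₀
    apply MeasureTheory.continuousWithinAt_of_dominated
      (bound := fun ω : ℝ => C ^ 2 * (ω ^ (2 * Δ - 1) * (1 + ω) ^ (-(2 * γ))))
    · filter_upwards [self_mem_nhdsWithin] with w hw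
      exact kms_meas hFc hGc hw.1 hw.2
    · filter_upwards [self_mem_nhdsWithin] with w hw
      filter_upwards [ae_restrict_mem measurableSet_Ioi] with ω hω
      exact kms_pointwise_bound hγ0 hC hFb hGb hw.1 hw.2 hω
    · exact aux_bound_integrable (C ^ 2) hΔ hγ
    · filter_upwards [ae_restrict_mem measurableSet_Ioi] with ω hω
      exact kms_contw hFc hGc hω hw₀
  -- Part 3 : differentiability on the open strip
  · intro w₀ hw₀
    obtain ⟨h0, h1⟩ := hw₀
    have hUopen : IsOpen {z : ℂ | 0 < z.im} := isOpen_lt continuous_const Complex.continuous_im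
    have hπ := Real.pi_pos
    set t₁ : ℝ := w₀.im / 2 with ht₁def
    set t₂ : ℝ := (1 + w₀.im) / 2 with ht₂def
    have ht₁0 : 0 < t₁ := by rw [ht₁def]; linarith
    have ht₂1 : t₂ < 1 := by rw [ht₂def]; linarith
    have hm : 0 < min (Real.sin (Real.pi * t₁)) (Real.sin (Real.pi * t₂)) := by
      apply lt_min
      · apply Real.sin_pos_of_pos_of_lt_pi (by positivity)
        rw [ht₁def]; nlinarith
      · apply Real.sin_pos_of_pos_of_lt_pi
        · rw [ht₂def]; nlinarith
        · rw [ht₂def]; nlinarith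
    set m : ℝ := min (Real.sin (Real.pi * t₁)) (Real.sin (Real.pi * t₂)) with hmdef
    set E : ℝ := Real.exp (Real.pi * (|w₀.re| + 1)) with hEdef
    have hE : 0 < E := Real.exp_pos _
    have hε : 0 < min 1 (min t₁ ((1 - w₀.im) / 2)) := by
      apply lt_min one_pos (lt_min ht₁0 (by linarith))
    set ε : ℝ := min 1 (min t₁ ((1 - w₀.im) / 2)) with hεdef
    -- location of points of the ball
    have hball : ∀ w ∈ Metric.ball w₀ ε,
        (t₁ ≤ w.im ∧ w.im ≤ t₂) ∧ |w.re| ≤ |w₀.re| + 1 := by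
      intro w hw
      have hdist : dist w w₀ < ε := hw
      have him : |w.im - w₀.im| < ε := by
        have h' := Complex.abs_im_le_norm (w - w₀)
        rw [Complex.sub_im] at h'
        calc |w.im - w₀.im| ≤ ‖w - w₀‖ := h'
          _ < ε := by rwa [Complex.dist_eq] at hdist
      have hre : |w.re - w₀.re| < ε := by
        have h' := Complex.abs_re_le_norm (w - w₀)
        rw [Complex.sub_re] at h'
        calc |w.re - w₀.re| ≤ ‖w - w₀‖ := h'
          _ < ε := by rwa [Complex.dist_eq] at hdist
      have hε1 : ε ≤ 1 := min_le_left _ _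
      have hε2 : ε ≤ t₁ := (min_le_right _ _).trans (min_le_left _ _)
      have hε3 : ε ≤ (1 - w₀.im) / 2 := (min_le_right _ _).trans (min_le_right _ _)
      have h1' := abs_lt.1 him
      have h2' := abs_lt.1 hre
      have habs := abs_sub_abs_le_abs_sub w.re w₀.re
      have habs2 := abs_lt.1 hre
      constructor
      · constructor
        · rw [ht₁def] at hε2 ⊢; linarith
        · rw [ht₂def]; linarith
      · linarith [le_abs_self (w.re - w₀.re)]
    -- strip membership of ball points
    have hstrip : ∀ w ∈ Metric.ball w₀ ε, 0 < w.im ∧ w.im < 1 := by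
      intro w hw
      obtain ⟨⟨ha, hb⟩, -⟩ := hball w hw
      exact ⟨lt_of_lt_of_le ht₁0 ha, lt_of_le_of_lt hb ht₂1⟩
    -- sin lower bound on ball
    have hsinm : ∀ w ∈ Metric.ball w₀ ε, m ≤ Real.sin (Real.pi * w.im) := by
      intro w hw
      obtain ⟨⟨ha, hb⟩, -⟩ := hball w hw
      exact kms_sin_min ht₁0.le ht₂1.le ha hb
    -- exp bounds on ball
    have hxb : ∀ w ∈ Metric.ball w₀ ε,
        Real.exp (-Real.pi * w.re) ≤ E ∧ 1 / E ≤ Real.exp (-Real.pi * w.re) ∧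
        Real.exp (Real.pi * w.re) ≤ E ∧ 1 / E ≤ Real.exp (Real.pi * w.re) := by
      intro w hw
      obtain ⟨-, hre⟩ := hball w hw
      have hkey1 : -Real.pi * w.re ≤ Real.pi * (|w₀.re| + 1) := by
        have : -w.re ≤ |w₀.re| + 1 := (neg_le_abs _).trans hre
        nlinarith
      have hkey2 : Real.pi * w.re ≤ Real.pi * (|w₀.re| + 1) := by
        have : w.re ≤ |w₀.re| + 1 := (le_abs_self _).trans hre
        nlinarith
      have hinv : (1:ℝ) / E = Real.exp (-(Real.pi * (|w₀.re| + 1))) := by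
        rw [hEdef, one_div, ← Real.exp_neg]
      refine ⟨Real.exp_le_exp.2 hkey1, ?_, Real.exp_le_exp.2 hkey2, ?_⟩
      · rw [hinv]; apply Real.exp_le_exp.2; linarith
      · rw [hinv]; apply Real.exp_le_exp.2; linarith
    -- imaginary-part lower bounds
    have hiu : ∀ w ∈ Metric.ball w₀ ε, ∀ {ω : ℝ}, 0 < ω →
        m / E * ω ≤ (-(Complex.exp (-(Real.pi : ℂ) * w)) * (ω:ℂ)).im := by
      intro w hw ω hω
      rw [kms_im_u]
      obtain ⟨-, hx2, -, -⟩ := hxb w hw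
      have hsin := hsinm w hw
      have h' : (1/E) * m ≤ Real.exp (-Real.pi * w.re) * Real.sin (Real.pi * w.im) :=
        mul_le_mul hx2 hsin hm.le (Real.exp_pos _).le
      have : m / E ≤ Real.exp (-Real.pi * w.re) * Real.sin (Real.pi * w.im) := by
        calc m / E = (1/E) * m := by ring
          _ ≤ _ := h'
      exact mul_le_mul_of_nonneg_right this hω.le
    have hiv : ∀ w ∈ Metric.ball w₀ ε, ∀ {ω : ℝ}, 0 < ω →
        m / E * ω ≤ (Complex.exp ((Real.pi : ℂ) * w) * (ω:ℂ)).im := by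
      intro w hw ω hω
      rw [kms_im_v]
      obtain ⟨-, -, -, hy2⟩ := hxb w hw
      have hsin := hsinm w hw
      have h' : (1/E) * m ≤ Real.exp (Real.pi * w.re) * Real.sin (Real.pi * w.im) :=
        mul_le_mul hy2 hsin hm.le (Real.exp_pos _).le
      have : m / E ≤ Real.exp (Real.pi * w.re) * Real.sin (Real.pi * w.im) := by
        calc m / E = (1/E) * m := by ring
          _ ≤ _ := h'
      exact mul_le_mul_of_nonneg_right this hω.le
    -- the derivative integrand
    set Φ' : ℂ → ℝ → ℂ := fun w ω =>
      ((ω ^ (2 * Δ - 1) : ℝ) : ℂ) *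
          (deriv F (-(Complex.exp (-(Real.pi : ℂ) * w)) * (ω:ℂ)) *
            (-(Complex.exp (-(Real.pi : ℂ) * w) * -(Real.pi : ℂ)) * (ω:ℂ))) *
          G (Complex.exp ((Real.pi : ℂ) * w) * (ω:ℂ))
        + ((ω ^ (2 * Δ - 1) : ℝ) : ℂ) * F (-(Complex.exp (-(Real.pi : ℂ) * w)) * (ω:ℂ)) *
          (deriv G (Complex.exp ((Real.pi : ℂ) * w) * (ω:ℂ)) *
            (Complex.exp ((Real.pi : ℂ) * w) * (Real.pi : ℂ) * (ω:ℂ))) with hΦ'def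
    have c₁pos : (0:ℝ) < (2:ℝ) ^ γ * 2 * C := by positivity
    set K : ℝ := 2 * ((2:ℝ) ^ γ * 2 * C * Real.pi * E ^ 2 * C / m) with hKdef
    -- the uniform bound for the derivative
    have hbound' : ∀ᵐ ω ∂(volume.restrict (Set.Ioi (0:ℝ))), ∀ w ∈ Metric.ball w₀ ε,
        ‖Φ' w ω‖ ≤ K * (ω ^ (2 * Δ - 1) * (1 + ω) ^ (-(2 * γ))) := by
      filter_upwards [ae_restrict_mem measurableSet_Ioi] with ω hω
      intro w hw
      have hω0 : (0:ℝ) < ω := hω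
      obtain ⟨hwstrip1, hwstrip2⟩ := hstrip w hw
      obtain ⟨hx1, hx2, hy1, hy2⟩ := hxb w hw
      have hup : 0 < (-(Complex.exp (-(Real.pi : ℂ) * w)) * (ω:ℂ)).im :=
        lt_of_lt_of_le (by positivity) (hiu w hw hω0)
      have hvp : 0 < (Complex.exp ((Real.pi : ℂ) * w) * (ω:ℂ)).im :=
        lt_of_lt_of_le (by positivity) (hiv w hw hω0)
      have hs : (0:ℝ) ≤ ω ^ (2 * Δ - 1) := Real.rpow_nonneg hω0.le _
      have hdF := kms_deriv_bound hC hγ0 hFc hFa hFb hup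
      have hdG := kms_deriv_bound hC hγ0 hGc hGa hGb hvp
      rw [kms_norm_u w hω0.le] at hdF
      rw [kms_norm_v w hω0.le] at hdG
      have hGv := hGb _ hvp.le
      have hFu := hFb _ hup.le
      rw [kms_norm_v w hω0.le] at hGv
      rw [kms_norm_u w hω0.le] at hFu
      have hpq := aux_prod_bound hγ0.le (Real.exp_pos (-Real.pi * w.re))
        (Real.exp_pos (Real.pi * w.re)) (kms_xy w) hω0.le
      have hqp : (1 + Real.exp (Real.pi * w.re) * ω) ^ (-γ) *
          (1 + Real.exp (-Real.pi * w.re) * ω) ^ (-γ) ≤ (1 + ω) ^ (-(2 * γ)) := by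
        rwa [mul_comm] at hpq
      have ht1 : ‖((ω ^ (2 * Δ - 1) : ℝ) : ℂ) *
          (deriv F (-(Complex.exp (-(Real.pi : ℂ) * w)) * (ω:ℂ)) *
            (-(Complex.exp (-(Real.pi : ℂ) * w) * -(Real.pi : ℂ)) * (ω:ℂ))) *
          G (Complex.exp ((Real.pi : ℂ) * w) * (ω:ℂ))‖
          ≤ ((2:ℝ) ^ γ * 2 * C * Real.pi * E ^ 2 * C / m) *
            (ω ^ (2 * Δ - 1) * (1 + ω) ^ (-(2 * γ))) := by
        rw [norm_mul, norm_mul, norm_mul, kms_norm_u' w hω0.le, Complex.norm_real,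
          Real.norm_eq_abs, abs_of_nonneg hs]
        exact kms_alg hs (Real.rpow_nonneg (by positivity) _) (Real.rpow_nonneg (by positivity) _)
          hpq c₁pos.le hC.le hE hm hω0 (hiu w hw hω0) hup hdF (norm_nonneg _)
          hx1 (Real.exp_pos _).le hGv (norm_nonneg _)
      have ht2 : ‖((ω ^ (2 * Δ - 1) : ℝ) : ℂ) *
          F (-(Complex.exp (-(Real.pi : ℂ) * w)) * (ω:ℂ)) *
          (deriv G (Complex.exp ((Real.pi : ℂ) * w) * (ω:ℂ)) *
            (Complex.exp ((Real.pi : ℂ) * w) * (Real.pi : ℂ) * (ω:ℂ)))‖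
          ≤ ((2:ℝ) ^ γ * 2 * C * Real.pi * E ^ 2 * C / m) *
            (ω ^ (2 * Δ - 1) * (1 + ω) ^ (-(2 * γ))) := by
        rw [norm_mul, norm_mul, norm_mul, kms_norm_v' w hω0.le, Complex.norm_real,
          Real.norm_eq_abs, abs_of_nonneg hs]
        have hre : ω ^ (2 * Δ - 1) * ‖F (-(Complex.exp (-(Real.pi : ℂ) * w)) * (ω:ℂ))‖ *
            (‖deriv G (Complex.exp ((Real.pi : ℂ) * w) * (ω:ℂ))‖ *
              (Real.exp (Real.pi * w.re) * Real.pi * ω))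
            = ω ^ (2 * Δ - 1) *
              (‖deriv G (Complex.exp ((Real.pi : ℂ) * w) * (ω:ℂ))‖ *
                (Real.exp (Real.pi * w.re) * Real.pi * ω)) *
              ‖F (-(Complex.exp (-(Real.pi : ℂ) * w)) * (ω:ℂ))‖ := by ring
        rw [hre]
        exact kms_alg hs (Real.rpow_nonneg (by positivity) _) (Real.rpow_nonneg (by positivity) _)
          hqp c₁pos.le hC.le hE hm hω0 (hiv w hw hω0) hvp hdG (norm_nonneg _)
          hy1 (Real.exp_pos _).le hFu (norm_nonneg _)
      calc ‖Φ' w ω‖ ≤ _ + _ := norm_add_le _ _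
        _ ≤ ((2:ℝ) ^ γ * 2 * C * Real.pi * E ^ 2 * C / m) *
              (ω ^ (2 * Δ - 1) * (1 + ω) ^ (-(2 * γ)))
            + ((2:ℝ) ^ γ * 2 * C * Real.pi * E ^ 2 * C / m) *
              (ω ^ (2 * Δ - 1) * (1 + ω) ^ (-(2 * γ))) := add_le_add ht1 ht2
        _ = K * (ω ^ (2 * Δ - 1) * (1 + ω) ^ (-(2 * γ))) := by rw [hKdef]; ring
    -- differentiability of the integrand in w
    have hdiff : ∀ᵐ ω ∂(volume.restrict (Set.Ioi (0:ℝ))), ∀ w ∈ Metric.ball w₀ ε,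
        HasDerivAt (fun w : ℂ => ((ω ^ (2 * Δ - 1) : ℝ) : ℂ) *
          F (-(Complex.exp (-((Real.pi : ℂ)) * w)) * (ω : ℂ)) *
          G (Complex.exp ((Real.pi : ℂ) * w) * (ω : ℂ))) (Φ' w ω) w := by
      filter_upwards [ae_restrict_mem measurableSet_Ioi] with ω hω
      intro w hw
      have hω0 : (0:ℝ) < ω := hω
      have hup : 0 < (-(Complex.exp (-(Real.pi : ℂ) * w)) * (ω:ℂ)).im :=
        lt_of_lt_of_le (by positivity) (hiu w hw hω0)
      have hvp : 0 < (Complex.exp ((Real.pi : ℂ) * w) * (ω:ℂ)).im :=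
        lt_of_lt_of_le (by positivity) (hiv w hw hω0)
      have hud : HasDerivAt (fun w : ℂ => -(Complex.exp (-(Real.pi : ℂ) * w)) * (ω:ℂ))
          (-(Complex.exp (-(Real.pi : ℂ) * w) * -(Real.pi : ℂ)) * (ω:ℂ)) w := by
        have h1 : HasDerivAt (fun w : ℂ => -(Real.pi : ℂ) * w) (-(Real.pi : ℂ)) w := by
          simpa using (hasDerivAt_id w).const_mul (-(Real.pi : ℂ))
        exact (h1.cexp.neg).mul_const _
      have hvd : HasDerivAt (fun w : ℂ => Complex.exp ((Real.pi : ℂ) * w) * (ω:ℂ))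
          (Complex.exp ((Real.pi : ℂ) * w) * (Real.pi : ℂ) * (ω:ℂ)) w := by
        have h2 : HasDerivAt (fun w : ℂ => (Real.pi : ℂ) * w) ((Real.pi : ℂ)) w := by
          simpa using (hasDerivAt_id w).const_mul ((Real.pi : ℂ))
        exact h2.cexp.mul_const _
      have hFd : HasDerivAt F (deriv F (-(Complex.exp (-(Real.pi : ℂ) * w)) * (ω:ℂ)))
          (-(Complex.exp (-(Real.pi : ℂ) * w)) * (ω:ℂ)) :=
        (hFa.differentiableAt (hUopen.mem_nhds hup)).hasDerivAt
      have hGd : HasDerivAt G (deriv G (Complex.exp ((Real.pi : ℂ) * w) * (ω:ℂ)))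
          (Complex.exp ((Real.pi : ℂ) * w) * (ω:ℂ)) :=
        (hGa.differentiableAt (hUopen.mem_nhds hvp)).hasDerivAt
      have hA : HasDerivAt
          (fun w : ℂ => ((ω ^ (2 * Δ - 1) : ℝ) : ℂ) *
            F (-(Complex.exp (-(Real.pi : ℂ) * w)) * (ω:ℂ)))
          (((ω ^ (2 * Δ - 1) : ℝ) : ℂ) *
            (deriv F (-(Complex.exp (-(Real.pi : ℂ) * w)) * (ω:ℂ)) *
              (-(Complex.exp (-(Real.pi : ℂ) * w) * -(Real.pi : ℂ)) * (ω:ℂ)))) w :=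
        (HasDerivAt.comp w hFd hud).const_mul _
      have hB : HasDerivAt
          (fun w : ℂ => G (Complex.exp ((Real.pi : ℂ) * w) * (ω:ℂ)))
          (deriv G (Complex.exp ((Real.pi : ℂ) * w) * (ω:ℂ)) *
            (Complex.exp ((Real.pi : ℂ) * w) * (Real.pi : ℂ) * (ω:ℂ))) w :=
        HasDerivAt.comp w hGd hvd
      exact hA.mul hB
    -- measurability of the derivative integrand at w₀
    have hF'meas : AEStronglyMeasurable (Φ' w₀) (volume.restrict (Set.Ioi (0:ℝ))) := by
      have hderivF : ContinuousOn (deriv F) {z : ℂ | 0 < z.im} :=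
        ((hFa.analyticOnNhd hUopen).deriv.differentiableOn).continuousOn
      have hderivG : ContinuousOn (deriv G) {z : ℂ | 0 < z.im} :=
        ((hGa.analyticOnNhd hUopen).deriv.differentiableOn).continuousOn
      have hsin0 : 0 < Real.sin (Real.pi * w₀.im) :=
        Real.sin_pos_of_pos_of_lt_pi (by positivity) (by nlinarith)
      have hmapu : Set.MapsTo (fun ω : ℝ => -(Complex.exp (-(Real.pi : ℂ) * w₀)) * (ω:ℂ))
          (Set.Ioi 0) {z : ℂ | 0 < z.im} := by
        intro ω hω
        have hω0 : (0:ℝ) < ω := hω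
        simp only [Set.mem_setOf_eq, kms_im_u]
        positivity
      have hmapv : Set.MapsTo (fun ω : ℝ => Complex.exp ((Real.pi : ℂ) * w₀) * (ω:ℂ))
          (Set.Ioi 0) {z : ℂ | 0 < z.im} := by
        intro ω hω
        have hω0 : (0:ℝ) < ω := hω
        simp only [Set.mem_setOf_eq, kms_im_v]
        positivity
      have huc : Continuous (fun ω : ℝ => -(Complex.exp (-(Real.pi : ℂ) * w₀)) * (ω:ℂ)) :=
        continuous_const.mul Complex.continuous_ofReal
      have hvc : Continuous (fun ω : ℝ => Complex.exp ((Real.pi : ℂ) * w₀) * (ω:ℂ)) :=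
        continuous_const.mul Complex.continuous_ofReal
      have hc : ContinuousOn (fun ω : ℝ => ((ω ^ (2 * Δ - 1) : ℝ) : ℂ)) (Set.Ioi 0) := by
        intro ω hω
        exact (Complex.continuous_ofReal.continuousAt.comp
          (Real.continuousAt_rpow_const _ _ (Or.inl (ne_of_gt hω)))).continuousWithinAt
      have hdFcont : ContinuousOn
          (fun ω : ℝ => deriv F (-(Complex.exp (-(Real.pi : ℂ) * w₀)) * (ω:ℂ))) (Set.Ioi 0) :=
        ContinuousOn.comp (g := deriv F) hderivF huc.continuousOn hmapu
      have hdGcont : ContinuousOn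
          (fun ω : ℝ => deriv G (Complex.exp ((Real.pi : ℂ) * w₀) * (ω:ℂ))) (Set.Ioi 0) :=
        ContinuousOn.comp (g := deriv G) hderivG hvc.continuousOn hmapv
      have hFcont : ContinuousOn
          (fun ω : ℝ => F (-(Complex.exp (-(Real.pi : ℂ) * w₀)) * (ω:ℂ))) (Set.Ioi 0) :=
        ContinuousOn.comp (g := F) hFc huc.continuousOn
          (hmapu.mono_right (fun z (hz : 0 < z.im) => le_of_lt hz))
      have hGcont : ContinuousOn
          (fun ω : ℝ => G (Complex.exp ((Real.pi : ℂ) * w₀) * (ω:ℂ))) (Set.Ioi 0) :=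
        ContinuousOn.comp (g := G) hGc hvc.continuousOn
          (hmapv.mono_right (fun z (hz : 0 < z.im) => le_of_lt hz))
      have huc' : Continuous
          (fun ω : ℝ => -(Complex.exp (-(Real.pi : ℂ) * w₀) * -(Real.pi : ℂ)) * (ω:ℂ)) :=
        continuous_const.mul Complex.continuous_ofReal
      have hvc' : Continuous
          (fun ω : ℝ => Complex.exp ((Real.pi : ℂ) * w₀) * (Real.pi : ℂ) * (ω:ℂ)) :=
        continuous_const.mul Complex.continuous_ofReal
      apply ContinuousOn.aestronglyMeasurable _ measurableSet_Ioi
      exact ((hc.mul (hdFcont.mul huc'.continuousOn)).mul hGcont).add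
        ((hc.mul hFcont).mul (hdGcont.mul hvc'.continuousOn))
    -- apply differentiation under the integral sign
    have hmeasev : ∀ᶠ w in nhds w₀, AEStronglyMeasurable
        (fun ω : ℝ => ((ω ^ (2 * Δ - 1) : ℝ) : ℂ) *
          F (-(Complex.exp (-((Real.pi : ℂ)) * w)) * (ω : ℂ)) *
          G (Complex.exp ((Real.pi : ℂ) * w) * (ω : ℂ)))
        (volume.restrict (Set.Ioi (0:ℝ))) := by
      filter_upwards [Metric.ball_mem_nhds w₀ hε] with w hw
      obtain ⟨hw1, hw2⟩ := hstrip w hw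
      exact kms_meas hFc hGc hw1.le hw2.le
    obtain ⟨-, hder⟩ := hasDerivAt_integral_of_dominated_loc_of_deriv_le (Metric.ball_mem_nhds w₀ hε) hmeasev
      (hint w₀ h0.le h1.le) hF'meas hbound'
      (aux_bound_integrable K hΔ hγ) hdiff
    exact hder.differentiableAt.differentiableWithinAt
  -- Part 4 : boundary value at Im w = 0
  · intro s
    rw [kmsFun]
    congr 1
    funext ω
    have e1 : -(Complex.exp (-((Real.pi : ℂ)) * (s:ℂ))) * (ω:ℂ)
        = ((-(Real.exp (-(Real.pi * s))) * ω : ℝ) : ℂ) := by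
      push_cast [Complex.ofReal_exp]
      ring_nf
    have e2 : Complex.exp ((Real.pi : ℂ) * (s:ℂ)) * (ω:ℂ)
        = ((Real.exp (Real.pi * s) * ω : ℝ) : ℂ) := by
      push_cast [Complex.ofReal_exp]
      ring_nf
    rw [e1, e2]
  -- Part 5 : boundary value at Im w = 1
  · intro s
    rw [kmsFun]
    congr 1
    funext ω
    have hexpI : Complex.exp (-(Real.pi : ℂ) * Complex.I) = -1 := by
      rw [show -(Real.pi : ℂ) * Complex.I = -((Real.pi : ℂ) * Complex.I) by ring,
        Complex.exp_neg, Complex.exp_pi_mul_I]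
      norm_num
    have hexpI' : Complex.exp ((Real.pi : ℂ) * Complex.I) = -1 := Complex.exp_pi_mul_I
    have e1 : -(Complex.exp (-((Real.pi : ℂ)) * ((s:ℂ) + Complex.I))) * (ω:ℂ)
        = ((Real.exp (-(Real.pi * s)) * ω : ℝ) : ℂ) := by
      rw [show -((Real.pi : ℂ)) * ((s:ℂ) + Complex.I)
          = -(Real.pi : ℂ) * (s:ℂ) + -(Real.pi : ℂ) * Complex.I by ring,
        Complex.exp_add, hexpI]
      push_cast [Complex.ofReal_exp]
      ring_nf
    have e2 : Complex.exp ((Real.pi : ℂ) * ((s:ℂ) + Complex.I)) * (ω:ℂ)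
        = ((-(Real.exp (Real.pi * s)) * ω : ℝ) : ℂ) := by
      rw [show (Real.pi : ℂ) * ((s:ℂ) + Complex.I)
          = (Real.pi : ℂ) * (s:ℂ) + (Real.pi : ℂ) * Complex.I by ring,
        Complex.exp_add, hexpI']
      push_cast [Complex.ofReal_exp]
      ring_nf
    rw [e1, e2]
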